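/- arXiv:2507.23296 — 3 statements merged into one kernel-verified Lean document; each statement's English description precedes it below -/
import Mathlib

section
/- Single-user communication SINR upper bound (Theorem 1, Eq. (16)): Let N_B, N_I be positive integers, σ² > 0 and P ≥ 0 real, α_IU, α_BI ∈ ℂ, and let a_B ∈ ℂ^{N_B}, a_IU ∈ ℂ^{N_I}, a_BI ∈ ℂ^{N_I}, ξ ∈ ℂ^{N_I} be vectors all of whose entries have modulus 1. Let w_c, w_s ∈ ℂ^{N_B} satisfy ‖w_c‖² + ‖w_s‖² ≤ P. Define the scalar s = ∑_{m=1}^{N_I} (a_IU)_m ξ_m conj((a_BI)_m) and the SINR γ_c = |α_IU α_BI s · (∑_n (a_B)_n (w_c)_n)|² / ( |α_IU α_BI s · (∑_n (a_B)_n (w_s)_n)|² + σ² ). Then γ_c ≤ P · N_B · |α_BI α_IU|² · N_I² / σ². -/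
/-- Single-user communication SINR upper bound (Theorem 1, Eq. (16)). -/
theorem single_user_sinr_upper_bound
    (N_B N_I : ℕ) (hNB : 0 < N_B) (hNI : 0 < N_I)
    (σ2 P : ℝ) (hσ2 : 0 < σ2) (hP : 0 ≤ P)
    (αIU αBI : ℂ)
    (aB : Fin N_B → ℂ) (aIU aBIv ξ : Fin N_I → ℂ)
    (haB : ∀ n, ‖aB n‖ = 1)
    (haIU : ∀ m, ‖aIU m‖ = 1)
    (haBI : ∀ m, ‖aBIv m‖ = 1)
    (hξ : ∀ m, ‖ξ m‖ = 1)
    (wc ws : Fin N_B → ℂ)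
    (hpow : (∑ n, ‖wc n‖ ^ 2) + (∑ n, ‖ws n‖ ^ 2) ≤ P)
    (s : ℂ) (hs : s = ∑ m, aIU m * ξ m * (starRingEnd ℂ) (aBIv m))
    (γc : ℝ)
    (hγc : γc = ‖αIU * αBI * s * (∑ n, aB n * wc n)‖ ^ 2 /
        (‖αIU * αBI * s * (∑ n, aB n * ws n)‖ ^ 2 + σ2)) :
    γc ≤ P * N_B * ‖αBI * αIU‖ ^ 2 * N_I ^ 2 / σ2 := by
  have hsle : ‖s‖ ≤ N_I := by
    rw [hs]
    calc ‖∑ m, aIU m * ξ m * (starRingEnd ℂ) (aBIv m)‖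
        ≤ ∑ m, ‖aIU m * ξ m * (starRingEnd ℂ) (aBIv m)‖ :=
          norm_sum_le _ _
      _ = ∑ _m : Fin N_I, (1:ℝ) := by
          refine Finset.sum_congr rfl fun m _ => ?_
          simp [map_mul, haIU m, hξ m, haBI m]
      _ = N_I := by simp
  have hwc : ‖∑ n, aB n * wc n‖ ^ 2 ≤ N_B * ∑ n, ‖wc n‖ ^ 2 := by
    calc ‖∑ n, aB n * wc n‖ ^ 2
        ≤ (∑ n, ‖wc n‖) ^ 2 := by
          apply pow_le_pow_left₀ (by positivity)
          calc ‖∑ n, aB n * wc n‖ ≤ ∑ n, ‖aB n * wc n‖ :=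
                norm_sum_le _ _
            _ = ∑ n, ‖wc n‖ := by
                refine Finset.sum_congr rfl fun n _ => ?_
                simp [map_mul, haB n]
      _ ≤ N_B * ∑ n, ‖wc n‖ ^ 2 := by
          simpa using sq_sum_le_card_mul_sum_sq (s := Finset.univ)
            (f := fun n => ‖wc n‖)
  have hwcP : (∑ n, ‖wc n‖ ^ 2) ≤ P := by
    have h2 : (0:ℝ) ≤ ∑ n, ‖ws n‖ ^ 2 := by positivity
    linarith
  have hnum : ‖αIU * αBI * s * (∑ n, aB n * wc n)‖ ^ 2
      ≤ P * N_B * ‖αBI * αIU‖ ^ 2 * N_I ^ 2 := by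
    have hT : ‖∑ n, aB n * wc n‖ ^ 2 ≤ N_B * P := by
      calc ‖∑ n, aB n * wc n‖ ^ 2 ≤ N_B * ∑ n, ‖wc n‖ ^ 2 := hwc
        _ ≤ N_B * P := by
            exact mul_le_mul_of_nonneg_left hwcP (by positivity)
    have hs2 : ‖s‖ ^ 2 ≤ (N_I : ℝ) ^ 2 :=
      pow_le_pow_left₀ (norm_nonneg s) hsle 2
    have heq : ‖αIU * αBI * s * (∑ n, aB n * wc n)‖ ^ 2
        = ‖αBI * αIU‖ ^ 2 * (‖s‖ ^ 2 * ‖∑ n, aB n * wc n‖ ^ 2) := by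
      simp [map_mul, mul_pow]; ring
    rw [heq]
    have habs : (0:ℝ) ≤ ‖αBI * αIU‖ ^ 2 := by positivity
    calc ‖αBI * αIU‖ ^ 2 * (‖s‖ ^ 2 * ‖∑ n, aB n * wc n‖ ^ 2)
        ≤ ‖αBI * αIU‖ ^ 2 * ((N_I:ℝ) ^ 2 * (N_B * P)) := by
          apply mul_le_mul_of_nonneg_left _ habs
          apply mul_le_mul hs2 hT (by positivity) (by positivity)
      _ = P * N_B * ‖αBI * αIU‖ ^ 2 * N_I ^ 2 := by ring
  rw [hγc]
  have hden : σ2 ≤ ‖αIU * αBI * s * (∑ n, aB n * ws n)‖ ^ 2 + σ2 := by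
    nlinarith [sq_nonneg (‖αIU * αBI * s * (∑ n, aB n * ws n)‖)]
  calc ‖αIU * αBI * s * (∑ n, aB n * wc n)‖ ^ 2 /
        (‖αIU * αBI * s * (∑ n, aB n * ws n)‖ ^ 2 + σ2)
      ≤ ‖αIU * αBI * s * (∑ n, aB n * wc n)‖ ^ 2 / σ2 := by
        gcongr

    _ ≤ P * N_B * ‖αBI * αIU‖ ^ 2 * N_I ^ 2 / σ2 := by
        gcongr
end

section
/- Single-user sensing SCNR upper bound (Theorem 1, Eq. (15)): Let N_B, N_I, N_S, J be positive integers, σ² > 0 and P ≥ 0 real, α_IST, α_IS0, α_BI ∈ ℂ, and let a_B ∈ ℂ^{N_B}, a_IST ∈ ℂ^{N_I}, a_IS0 ∈ ℂ^{N_I}, a_BI ∈ ℂ^{N_I}, ξ ∈ ℂ^{N_I}, a_ST ∈ ℂ^{N_S}, a_S0 ∈ ℂ^{N_S} be vectors all of whose entries have modulus 1. Let r ∈ ℂ^{N_S} with ‖r‖ = 1 and let w_1, …, w_J ∈ ℂ^{N_B} with ∑_j ‖w_j‖² ≤ P. Define s_T = ∑_m (a_IST)_m ξ_m conj((a_BI)_m),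 s_0 = ∑_m (a_IS0)_m ξ_m conj((a_BI)_m), t_T = ∑_n conj(r_n) conj((a_ST)_n), t_0 = ∑_n conj(r_n) conj((a_S0)_n), and the SCNR γ_s = |α_IST α_BI t_T s_T|² ∑_j |∑_n (a_B)_n (w_j)_n|² / ( |α_IS0 α_BI t_0 s_0|² ∑_j |∑_n (a_B)_n (w_j)_n|² + σ² ). Then γ_s ≤ P · N_B · N_S · |α_IST α_BI|² · N_I² / σ². -/
/-- Single-user sensing SCNR upper bound (Theorem 1, Eq. (15)). -/
theorem single_user_scnr_upper_bound
    (N_B N_I N_S J : ℕ) (hNB : 0 < N_B) (hNI : 0 < N_I) (hNS : 0 < N_S) (hJ : 0 < J)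
    (σ2 P : ℝ) (hσ2 : 0 < σ2) (hP : 0 ≤ P)
    (αIST αIS0 αBI : ℂ)
    (aB : Fin N_B → ℂ) (aISTv aIS0v aBIv ξ : Fin N_I → ℂ) (aST aS0 : Fin N_S → ℂ)
    (haB : ∀ n, ‖aB n‖ = 1)
    (haIST : ∀ m, ‖aISTv m‖ = 1)
    (haIS0 : ∀ m, ‖aIS0v m‖ = 1)
    (haBI : ∀ m, ‖aBIv m‖ = 1)
    (hξ : ∀ m, ‖ξ m‖ = 1)
    (haST : ∀ n, ‖aST n‖ = 1)
    (haS0 : ∀ n, ‖aS0 n‖ = 1)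
    (r : Fin N_S → ℂ) (hr : Real.sqrt (∑ n, ‖r n‖ ^ 2) = 1)
    (w : Fin J → Fin N_B → ℂ)
    (hw : (∑ j, ∑ n, ‖w j n‖ ^ 2) ≤ P)
    (sT s0 tT t0 : ℂ)
    (hsT : sT = ∑ m, aISTv m * ξ m * (starRingEnd ℂ) (aBIv m))
    (hs0 : s0 = ∑ m, aIS0v m * ξ m * (starRingEnd ℂ) (aBIv m))
    (htT : tT = ∑ n, (starRingEnd ℂ) (r n) * (starRingEnd ℂ) (aST n))
    (ht0 : t0 = ∑ n, (starRingEnd ℂ) (r n) * (starRingEnd ℂ) (aS0 n))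
    (γs : ℝ)
    (hγs : γs =
        ‖αIST * αBI * tT * sT‖ ^ 2 * (∑ j, ‖∑ n, aB n * w j n‖ ^ 2) /
        (‖αIS0 * αBI * t0 * s0‖ ^ 2 * (∑ j, ‖∑ n, aB n * w j n‖ ^ 2)
          + σ2)) :
    γs ≤ P * N_B * N_S * ‖αIST * αBI‖ ^ 2 * N_I ^ 2 / σ2 := by
  set S : ℝ := ∑ j, ‖∑ n, aB n * w j n‖ ^ 2 with hS
  have hSnn : 0 ≤ S := Finset.sum_nonneg fun j _ => sq_nonneg _
  -- sum of squared |r| equals 1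
  have hrsum : (∑ n, ‖r n‖ ^ 2) = 1 := by
    have h0 : 0 ≤ ∑ n, ‖r n‖ ^ 2 := Finset.sum_nonneg fun n _ => sq_nonneg _
    nlinarith [Real.sq_sqrt h0, hr]
  -- bound on S
  have hSb : S ≤ N_B * P := by
    have hj : ∀ j, ‖∑ n, aB n * w j n‖ ^ 2 ≤ N_B * ∑ n, ‖w j n‖ ^ 2 := by
      intro j
      have h1 : ‖∑ n, aB n * w j n‖ ≤ ∑ n, ‖w j n‖ := by
        refine (norm_sum_le _ _).trans (le_of_eq ?_)
        refine Finset.sum_congr rfl fun n _ => ?_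
        rw [norm_mul, haB n, one_mul]
      have h2 : (∑ n, ‖w j n‖) ^ 2 ≤ N_B * ∑ n, ‖w j n‖ ^ 2 := by
        have := Finset.sum_mul_sq_le_sq_mul_sq Finset.univ (fun _ : Fin N_B => (1:ℝ))
          (fun n => ‖w j n‖)
        simpa using this
      calc ‖∑ n, aB n * w j n‖ ^ 2
          ≤ (∑ n, ‖w j n‖) ^ 2 := by
            apply pow_le_pow_left₀ (norm_nonneg _) h1
        _ ≤ N_B * ∑ n, ‖w j n‖ ^ 2 := h2
    calc S ≤ ∑ j, (N_B : ℝ) * ∑ n, ‖w j n‖ ^ 2 :=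
          Finset.sum_le_sum fun j _ => hj j
      _ = N_B * ∑ j, ∑ n, ‖w j n‖ ^ 2 := by rw [Finset.mul_sum]
      _ ≤ N_B * P := by
          exact mul_le_mul_of_nonneg_left hw (by positivity)
  clear_value S
  -- bound on |sT|
  have hsTb : ‖sT‖ ≤ N_I := by
    rw [hsT]
    refine (norm_sum_le _ _).trans (le_of_eq ?_)
    rw [Finset.sum_congr rfl fun m _ => by
      rw [norm_mul, norm_mul, Complex.norm_conj, haIST m, hξ m, haBI m, one_mul, one_mul]]
    simp
  -- bound on |tT|^2
  have htTb : ‖tT‖ ^ 2 ≤ N_S := by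
    have h1 : ‖tT‖ ≤ ∑ n, ‖r n‖ := by
      rw [htT]
      refine (norm_sum_le _ _).trans (le_of_eq ?_)
      refine Finset.sum_congr rfl fun n _ => ?_
      rw [norm_mul, Complex.norm_conj, Complex.norm_conj, haST n, mul_one]
    have h2 : (∑ n, ‖r n‖) ^ 2 ≤ N_S * ∑ n, ‖r n‖ ^ 2 := by
      have := Finset.sum_mul_sq_le_sq_mul_sq Finset.univ (fun _ : Fin N_S => (1:ℝ))
        (fun n => ‖r n‖)
      simpa using this
    calc ‖tT‖ ^ 2 ≤ (∑ n, ‖r n‖) ^ 2 :=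
          pow_le_pow_left₀ (norm_nonneg _) h1 _
      _ ≤ N_S * ∑ n, ‖r n‖ ^ 2 := h2
      _ = N_S := by rw [hrsum, mul_one]
  -- numerator bound
  have hnum : ‖αIST * αBI * tT * sT‖ ^ 2 * S
      ≤ P * N_B * N_S * ‖αIST * αBI‖ ^ 2 * N_I ^ 2 := by
    have habs : ‖αIST * αBI * tT * sT‖ ^ 2
        = ‖αIST * αBI‖ ^ 2 * ‖tT‖ ^ 2 * ‖sT‖ ^ 2 := by
      rw [norm_mul, norm_mul]; ring
    rw [habs]
    have hsT2 : ‖sT‖ ^ 2 ≤ (N_I : ℝ) ^ 2 :=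
      pow_le_pow_left₀ (norm_nonneg _) hsTb _
    calc ‖αIST * αBI‖ ^ 2 * ‖tT‖ ^ 2 * ‖sT‖ ^ 2 * S
        ≤ ‖αIST * αBI‖ ^ 2 * (N_S : ℝ) * (N_I : ℝ) ^ 2 * ((N_B : ℝ) * P) := by
          gcongr <;> positivity
      _ = P * N_B * N_S * ‖αIST * αBI‖ ^ 2 * N_I ^ 2 := by ring
  rw [hγs]
  have hden : σ2 ≤ ‖αIS0 * αBI * t0 * s0‖ ^ 2 * S + σ2 := by
    nlinarith [sq_nonneg (‖αIS0 * αBI * t0 * s0‖), hSnn,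
      mul_nonneg (sq_nonneg (‖αIS0 * αBI * t0 * s0‖)) hSnn]
  exact div_le_div₀ (by positivity) hnum hσ2 hden
end

section
/- Achievability of the sensing upper bound under the PPR conditions (Theorem 1 / Step 2–3 of Algorithm 1): With the notation of the single-user SCNR γ_s, take J = 1 with the single transmit beamformer w_1 = √(P/N_B) · conj(a_B), receive combiner r = conj(a_ST)/√(N_S), and suppose N_I ≥ 2 and there is θ₀ ∈ ℝ such that for every m = 1,…,N_I: (a_IST)_m ξ_m conj((a_BI)_m) = exp(i θ₀) and (a_IS0)_m ξ_m conj((a_BI)_m) = exp(2πi (m−1)/N_I). Then the clutter term vanishes (s_0 = 0) and γ_s = P · N_B · N_S · |α_IST α_BI|² · N_I² / σ², i.e., the SCNR upper bound is attained with equality. -/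
/-- Achievability of the sensing upper bound under the PPR conditions
(Theorem 1 / Step 2–3 of Algorithm 1), with `J = 1` transmit beamformer. -/
theorem sensing_upper_bound_achieved
    (N_B N_I N_S : ℕ) (hNB : 0 < N_B) (hNI : 2 ≤ N_I) (hNS : 0 < N_S)
    (σ2 P : ℝ) (hσ2 : 0 < σ2) (hP : 0 ≤ P)
    (αIST αIS0 αBI : ℂ)
    (aB : Fin N_B → ℂ) (aISTv aIS0v aBIv ξ : Fin N_I → ℂ) (aST aS0 : Fin N_S → ℂ)
    (haB : ∀ n, ‖aB n‖ = 1)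
    (haIST : ∀ m, ‖aISTv m‖ = 1)
    (haIS0 : ∀ m, ‖aIS0v m‖ = 1)
    (haBI : ∀ m, ‖aBIv m‖ = 1)
    (hξ : ∀ m, ‖ξ m‖ = 1)
    (haST : ∀ n, ‖aST n‖ = 1)
    (haS0 : ∀ n, ‖aS0 n‖ = 1)
    (w : Fin N_B → ℂ)
    (hw : w = fun n => (Real.sqrt (P / N_B) : ℂ) * (starRingEnd ℂ) (aB n))
    (r : Fin N_S → ℂ)
    (hr : r = fun n => (starRingEnd ℂ) (aST n) / (Real.sqrt N_S : ℂ))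
    (θ0 : ℝ)
    (halignT : ∀ m, aISTv m * ξ m * (starRingEnd ℂ) (aBIv m) = Complex.exp (Complex.I * θ0))
    (halign0 : ∀ m : Fin N_I, aIS0v m * ξ m * (starRingEnd ℂ) (aBIv m)
        = Complex.exp (2 * Real.pi * Complex.I * ((m : ℕ) : ℂ) / (N_I : ℂ)))
    (sT s0 tT t0 : ℂ)
    (hsT : sT = ∑ m, aISTv m * ξ m * (starRingEnd ℂ) (aBIv m))
    (hs0 : s0 = ∑ m, aIS0v m * ξ m * (starRingEnd ℂ) (aBIv m))
    (htT : tT = ∑ n, (starRingEnd ℂ) (r n) * (starRingEnd ℂ) (aST n))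
    (ht0 : t0 = ∑ n, (starRingEnd ℂ) (r n) * (starRingEnd ℂ) (aS0 n))
    (γs : ℝ)
    (hγs : γs =
        ‖αIST * αBI * tT * sT‖ ^ 2 * ‖∑ n, aB n * w n‖ ^ 2 /
        (‖αIS0 * αBI * t0 * s0‖ ^ 2 * ‖∑ n, aB n * w n‖ ^ 2 + σ2)) :
    s0 = 0 ∧ γs = P * N_B * N_S * ‖αIST * αBI‖ ^ 2 * N_I ^ 2 / σ2 := by
  have hNI0 : (N_I : ℂ) ≠ 0 := Nat.cast_ne_zero.mpr (by omega)
  have hNS0 : (0:ℝ) < (N_S:ℝ) := by exact_mod_cast hNS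
  have hNB0 : (0:ℝ) < (N_B:ℝ) := by exact_mod_cast hNB
  -- s0 = 0
  have hζ := Complex.isPrimitiveRoot_exp N_I (by omega)
  have hs0z : s0 = 0 := by
    rw [hs0]
    have : ∀ m : Fin N_I, aIS0v m * ξ m * (starRingEnd ℂ) (aBIv m)
        = Complex.exp (2 * Real.pi * Complex.I / N_I) ^ (m : ℕ) := by
      intro m
      rw [halign0 m, ← Complex.exp_nat_mul]
      ring_nf
    rw [Finset.sum_congr rfl fun m _ => this m, Fin.sum_univ_eq_sum_range]
    exact hζ.geom_sum_eq_zero (by omega)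
  refine ⟨hs0z, ?_⟩
  -- sT
  have hsTv : sT = (N_I : ℂ) * Complex.exp (Complex.I * θ0) := by
    rw [hsT, Finset.sum_congr rfl fun m _ => halignT m, Finset.sum_const,
      Finset.card_univ, Fintype.card_fin, nsmul_eq_mul]
  have habs_sT : ‖sT‖ = N_I := by
    rw [hsTv, norm_mul, Complex.norm_exp]
    simp [Complex.mul_re]
  -- tT
  have htTv : tT = (N_S : ℂ) / (Real.sqrt N_S : ℂ) := by
    rw [htT, hr]
    have : ∀ n : Fin N_S, (starRingEnd ℂ) ((starRingEnd ℂ) (aST n) / (Real.sqrt N_S : ℂ))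
        * (starRingEnd ℂ) (aST n) = 1 / (Real.sqrt N_S : ℂ) := by
      intro n
      have h1 : aST n * (starRingEnd ℂ) (aST n) = 1 := by
        rw [Complex.mul_conj, Complex.normSq_eq_norm_sq, haST n]; norm_num
      rw [map_div₀, Complex.conj_conj, Complex.conj_ofReal, div_mul_eq_mul_div, h1]
    rw [Finset.sum_congr rfl fun n _ => this n, Finset.sum_const,
      Finset.card_univ, Fintype.card_fin, nsmul_eq_mul]
    ring
  have hsqrtNS : Real.sqrt N_S ≠ 0 := by positivity
  have habs_tT2 : ‖tT‖ ^ 2 = N_S := by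
    rw [htTv, norm_div, Complex.norm_natCast, Complex.norm_real, Real.norm_eq_abs,
      abs_of_nonneg (Real.sqrt_nonneg _), div_pow, Real.sq_sqrt hNS0.le, sq]
    field_simp
  -- beamformer sum
  have hBsum : (∑ n, aB n * w n) = (N_B : ℂ) * (Real.sqrt (P / N_B) : ℂ) := by
    rw [hw]
    have : ∀ n : Fin N_B, aB n * ((Real.sqrt (P / N_B) : ℂ) * (starRingEnd ℂ) (aB n))
        = (Real.sqrt (P / N_B) : ℂ) := by
      intro n
      rw [mul_comm ((Real.sqrt (P / N_B) : ℂ)), ← mul_assoc, Complex.mul_conj,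
        Complex.normSq_eq_norm_sq, haB n]
      norm_num
    rw [Finset.sum_congr rfl fun n _ => this n, Finset.sum_const,
      Finset.card_univ, Fintype.card_fin, nsmul_eq_mul]
  have habs_B2 : ‖∑ n, aB n * w n‖ ^ 2 = P * N_B := by
    rw [hBsum, norm_mul, Complex.norm_natCast, Complex.norm_real, Real.norm_eq_abs,
      abs_of_nonneg (Real.sqrt_nonneg _), mul_pow, Real.sq_sqrt (by positivity)]
    field_simp
  -- final computation
  rw [hγs, hs0z]
  simp only [mul_zero, map_zero, norm_zero, ne_eq, OfNat.ofNat_ne_zero, not_false_eq_true,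
    zero_pow, zero_mul, zero_add]
  rw [norm_mul, norm_mul, mul_pow, mul_pow, habs_sT, habs_tT2, habs_B2]
  push_cast
  ring
end
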